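/- Let A ∈ ℝ^{n×d}, and for U ⊆ {1,...,d} and k ∈ ℕ₊ define μ = min{‖Az‖² : ‖z‖₂ = 1, ‖z‖₀ ≤ |U| + k} and ν = max{‖Az‖² : ‖z‖₂ = 1, ‖z‖₀ ≤ |U| + 1}. Let F(S) = ‖Aw‖² - min_{supp(x) ⊆ S} ‖Aw - Ax‖² for a fixed w ∈ ℝ^d. Then for every two disjoint sets L, S ⊆ {1,...,d} with L ⊆ U and |S| ≤ k, it holds that (μ/ν)·(F(S ∪ L) - F(L)) ≤ Σ_{i ∈ S} (F(L ∪ {i}) - F(L)). -/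

import Mathlib

open Finset
open scoped RealInnerProductSpace

/-- `F S = ‖Aw‖² - min_{supp(x) ⊆ S} ‖Aw - Ax‖²`. -/
noncomputable def inChange {n d : ℕ} (A : Matrix (Fin n) (Fin d) ℝ) (w : Fin d → ℝ)
    (S : Finset (Fin d)) : ℝ :=
  (∑ i, (A.mulVec w i) ^ 2) -
    sInf {e : ℝ | ∃ x : Fin d → ℝ, (∀ j ∉ S, x j = 0) ∧
      e = ∑ i, (A.mulVec w i - A.mulVec x i) ^ 2}

/-- Values `‖Az‖²` over unit vectors `z` with at most `t` nonzero entries. -/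
noncomputable def sparseQuad {n d : ℕ} (A : Matrix (Fin n) (Fin d) ℝ) (t : ℕ) : Set ℝ :=
  {e : ℝ | ∃ z : Fin d → ℝ, (∑ i, z i ^ 2) = 1 ∧
    (Finset.univ.filter fun i => z i ≠ 0).card ≤ t ∧
    e = ∑ i, (A.mulVec z i) ^ 2}

noncomputable section

variable {n d : ℕ}

/-- columns map into Euclidean space -/
def colMap (A : Matrix (Fin n) (Fin d) ℝ) : (Fin d → ℝ) →ₗ[ℝ] EuclideanSpace ℝ (Fin n) :=
  (WithLp.linearEquiv 2 ℝ (Fin n → ℝ)).symm.toLinearMap ∘ₗ A.mulVecLin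

lemma colMap_apply (A : Matrix (Fin n) (Fin d) ℝ) (x : Fin d → ℝ) (i : Fin n) :
    colMap A x i = A.mulVec x i := rfl

lemma normsq_eq (v : EuclideanSpace ℝ (Fin n)) : ‖v‖ ^ 2 = ∑ i, v i ^ 2 := by
  rw [EuclideanSpace.norm_eq, Real.sq_sqrt (by positivity)]
  simp [sq_abs]

lemma inner_eq (v u : EuclideanSpace ℝ (Fin n)) : ⟪v, u⟫ = ∑ i, v i * u i := by
  simp [PiLp.inner_apply, RCLike.inner_apply, mul_comm]

def suppSub (S : Finset (Fin d)) : Submodule ℝ (Fin d → ℝ) where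
  carrier := {x | ∀ j ∉ S, x j = 0}
  add_mem' hx hy j hj := by simp [hx j hj, hy j hj]
  zero_mem' := by simp
  smul_mem' c x hx j hj := by simp [hx j hj]

def colSpan (A : Matrix (Fin n) (Fin d) ℝ) (S : Finset (Fin d)) :
    Submodule ℝ (EuclideanSpace ℝ (Fin n)) := (suppSub S).map (colMap A)

lemma mem_colSpan {A : Matrix (Fin n) (Fin d) ℝ} {S : Finset (Fin d)}
    {v : EuclideanSpace ℝ (Fin n)} :
    v ∈ colSpan A S ↔ ∃ x : Fin d → ℝ, (∀ j ∉ S, x j = 0) ∧ colMap A x = v := by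
  simp [colSpan, Submodule.mem_map, suppSub]

lemma colSpan_mono {A : Matrix (Fin n) (Fin d) ℝ} {S T : Finset (Fin d)} (h : S ⊆ T) :
    colSpan A S ≤ colSpan A T := by
  apply Submodule.map_mono
  intro x hx j hj
  exact hx j fun hjS => hj (h hjS)

lemma proj_pyth (K : Submodule ℝ (EuclideanSpace ℝ (Fin n)))
    (b v : EuclideanSpace ℝ (Fin n)) (hv : v ∈ K) :
    ‖b - v‖ ^ 2 = ‖b - (Submodule.orthogonalProjectionOnto K b : EuclideanSpace ℝ (Fin n))‖ ^ 2 +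
      ‖(Submodule.orthogonalProjectionOnto K b : EuclideanSpace ℝ (Fin n)) - v‖ ^ 2 := by
  set P : EuclideanSpace ℝ (Fin n) := (Submodule.orthogonalProjectionOnto K b : EuclideanSpace ℝ (Fin n))
  have h1 : b - v = (b - P) + (P - v) := by abel
  have horth : ⟪b - P, P - v⟫ = 0 :=
    (K.mem_orthogonal' _).mp (Submodule.sub_starProjection_mem_orthogonal b) _
      (K.sub_mem (Submodule.orthogonalProjectionOnto K b).2 hv)
  rw [h1, norm_add_sq_real, horth]; ring

lemma sum_sq_sub (A : Matrix (Fin n) (Fin d) ℝ) (w x : Fin d → ℝ) :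
    ∑ i, (A.mulVec w i - A.mulVec x i) ^ 2 = ‖colMap A w - colMap A x‖ ^ 2 := by
  rw [normsq_eq]
  exact Finset.sum_congr rfl fun i _ => rfl

lemma inChange_eq (A : Matrix (Fin n) (Fin d) ℝ) (w : Fin d → ℝ) (S : Finset (Fin d)) :
    inChange A w S = ‖colMap A w‖ ^ 2 -
      ‖colMap A w -
        (Submodule.orthogonalProjectionOnto (colSpan A S) (colMap A w) : EuclideanSpace ℝ (Fin n))‖ ^ 2 := by
  unfold inChange
  congr 1
  · rw [normsq_eq]
    exact Finset.sum_congr rfl fun i _ => rfl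
  · set b : EuclideanSpace ℝ (Fin n) := colMap A w with hb
    set P : EuclideanSpace ℝ (Fin n) := (Submodule.orthogonalProjectionOnto (colSpan A S) b : EuclideanSpace ℝ (Fin n)) with hP
    apply le_antisymm
    · obtain ⟨x, hx, hAx⟩ := mem_colSpan.mp (Submodule.orthogonalProjectionOnto (colSpan A S) b).2
      refine csInf_le ⟨0, ?_⟩ ⟨x, hx, ?_⟩
      · rintro e ⟨x, hx, rfl⟩; positivity
      · rw [sum_sq_sub, hAx]
    · refine le_csInf ⟨_, ⟨0, fun j _ => rfl, rfl⟩⟩ ?_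
      rintro e ⟨x, hx, rfl⟩
      rw [sum_sq_sub, proj_pyth _ b _ (mem_colSpan.mpr ⟨x, hx, rfl⟩)]
      have := sq_nonneg ‖P - colMap A x‖
      linarith

lemma diff_eq (A : Matrix (Fin n) (Fin d) ℝ) (w : Fin d → ℝ) {L T : Finset (Fin d)}
    (h : L ⊆ T) :
    inChange A w T - inChange A w L =
      ‖(Submodule.orthogonalProjectionOnto (colSpan A T)
          (colMap A w - (Submodule.orthogonalProjectionOnto (colSpan A L) (colMap A w) :
            EuclideanSpace ℝ (Fin n))) : EuclideanSpace ℝ (Fin n))‖ ^ 2 := by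
  rw [inChange_eq, inChange_eq]
  set b : EuclideanSpace ℝ (Fin n) := colMap A w with hbdef
  set PL : EuclideanSpace ℝ (Fin n) := (Submodule.orthogonalProjectionOnto (colSpan A L) b :
    EuclideanSpace ℝ (Fin n)) with hPL
  set r : EuclideanSpace ℝ (Fin n) := b - PL with hr
  have hPLmem : PL ∈ colSpan A T := colSpan_mono h (Submodule.orthogonalProjectionOnto (colSpan A L) b).2
  have hproj : (Submodule.orthogonalProjectionOnto (colSpan A T) b : EuclideanSpace ℝ (Fin n)) =
      PL + (Submodule.orthogonalProjectionOnto (colSpan A T) r : EuclideanSpace ℝ (Fin n)) := by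
    conv_lhs => rw [show b = PL + r by rw [hr]; abel]
    rw [map_add, Submodule.coe_add, (show ((colSpan A T).orthogonalProjectionOnto PL : EuclideanSpace ℝ (Fin n)) = PL from Submodule.starProjection_eq_self_iff.mpr hPLmem)]
  have hsub : b - (Submodule.orthogonalProjectionOnto (colSpan A T) b : EuclideanSpace ℝ (Fin n)) =
      r - (Submodule.orthogonalProjectionOnto (colSpan A T) r : EuclideanSpace ℝ (Fin n)) := by
    rw [hproj, hr]; abel
  have pyth := proj_pyth (colSpan A T) r 0 (zero_mem _)
  rw [sub_zero, sub_zero] at pyth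
  rw [hsub, hr] at *
  linarith

lemma sparseQuad_bddBelow (A : Matrix (Fin n) (Fin d) ℝ) (t : ℕ) :
    BddBelow (sparseQuad A t) := by
  refine ⟨0, ?_⟩
  rintro e ⟨z, _, _, rfl⟩
  positivity

lemma sparseQuad_bddAbove (A : Matrix (Fin n) (Fin d) ℝ) (t : ℕ) :
    BddAbove (sparseQuad A t) := by
  refine ⟨∑ i, (∑ j, |A i j|) ^ 2, ?_⟩
  rintro e ⟨z, hz1, _, rfl⟩
  refine Finset.sum_le_sum fun i _ => ?_
  have hzb : ∀ j, |z j| ≤ 1 := by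
    intro j
    rw [← sq_le_one_iff_abs_le_one]
    calc z j ^ 2 ≤ ∑ j', z j' ^ 2 :=
          Finset.single_le_sum (f := fun j' => z j' ^ 2) (fun j' _ => sq_nonneg _) (Finset.mem_univ j)
      _ = 1 := hz1
  have habs : |A.mulVec z i| ≤ ∑ j, |A i j| := by
    rw [Matrix.mulVec, dotProduct]
    refine (Finset.abs_sum_le_sum_abs _ _).trans (Finset.sum_le_sum fun j _ => ?_)
    rw [abs_mul]
    exact mul_le_of_le_one_right (abs_nonneg _) (hzb j)
  calc (A.mulVec z i) ^ 2 = |A.mulVec z i| ^ 2 := (sq_abs _).symm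
    _ ≤ (∑ j, |A i j|) ^ 2 := pow_le_pow_left₀ (abs_nonneg _) habs 2

lemma mu_le (A : Matrix (Fin n) (Fin d) ℝ) {t : ℕ} {x : Fin d → ℝ} {T : Finset (Fin d)}
    (hsupp : ∀ j ∉ T, x j = 0) (hcard : T.card ≤ t) :
    sInf (sparseQuad A t) * (∑ j, x j ^ 2) ≤ ∑ i, (A.mulVec x i) ^ 2 := by
  by_cases hx : (∑ j, x j ^ 2) = 0
  · rw [hx, mul_zero]; positivity
  · have hs : 0 < ∑ j, x j ^ 2 :=
      lt_of_le_of_ne (Finset.sum_nonneg fun j _ => sq_nonneg _) (Ne.symm hx)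
    set s := ∑ j, x j ^ 2 with hsdef
    set c := (Real.sqrt s)⁻¹ with hcdef
    have hsqrt : 0 < Real.sqrt s := Real.sqrt_pos.mpr hs
    have hc : 0 < c := inv_pos.mpr hsqrt
    have hc2 : c ^ 2 = s⁻¹ := by
      rw [hcdef, ← Real.sqrt_inv, Real.sq_sqrt (by positivity)]
    have hmem : (∑ i, (A.mulVec (c • x) i) ^ 2) ∈ sparseQuad A t := by
      refine ⟨c • x, ?_, ?_, rfl⟩
      · simp only [Pi.smul_apply, smul_eq_mul, mul_pow]
        rw [← Finset.mul_sum, ← hsdef, hc2, inv_mul_cancel₀ (ne_of_gt hs)]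
      · refine le_trans (Finset.card_le_card ?_) hcard
        intro j hj
        simp only [Finset.mem_filter, Pi.smul_apply, smul_eq_mul] at hj
        by_contra hjT
        exact hj.2 (by rw [hsupp j hjT, mul_zero])
    have hle := csInf_le (sparseQuad_bddBelow A t) hmem
    have heq : (∑ i, (A.mulVec (c • x) i) ^ 2) = s⁻¹ * ∑ i, (A.mulVec x i) ^ 2 := by
      rw [Matrix.mulVec_smul, Finset.mul_sum]
      refine Finset.sum_congr rfl fun i _ => ?_
      simp only [Pi.smul_apply, smul_eq_mul, mul_pow, hc2]
    rw [heq] at hle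
    calc sInf (sparseQuad A t) * s ≤ (s⁻¹ * ∑ i, (A.mulVec x i) ^ 2) * s :=
          mul_le_mul_of_nonneg_right hle hs.le
      _ = ∑ i, (A.mulVec x i) ^ 2 := by field_simp

lemma col_norm_le (A : Matrix (Fin n) (Fin d) ℝ) (i : Fin d) (t : ℕ) (ht : 1 ≤ t) :
    ‖colMap A (Pi.single i 1)‖ ^ 2 ≤ sSup (sparseQuad A t) := by
  apply le_csSup (sparseQuad_bddAbove A t)
  refine ⟨Pi.single i 1, ?_, ?_, ?_⟩
  · simp [Pi.single_apply]
  · have h1 : (Finset.univ.filter fun j => (Pi.single i 1 : Fin d → ℝ) j ≠ 0) = {i} := by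
      ext j; simp [Pi.single_apply]
    rw [h1, Finset.card_singleton]; exact ht
  · rw [normsq_eq]
    exact Finset.sum_congr rfl fun i' _ => rfl

lemma inner_colMap (A : Matrix (Fin n) (Fin d) ℝ) (v : EuclideanSpace ℝ (Fin n))
    (x : Fin d → ℝ) :
    ⟪v, colMap A x⟫ = ∑ j, x j * ⟪v, colMap A (Pi.single j 1)⟫ := by
  simp only [inner_eq, colMap_apply]
  simp only [Matrix.mulVec, dotProduct, Pi.single_apply]
  simp only [mul_ite, mul_one, mul_zero, Finset.sum_ite_eq', Finset.mem_univ, if_true]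
  simp only [Finset.mul_sum]
  rw [Finset.sum_comm]
  exact Finset.sum_congr rfl fun j _ => Finset.sum_congr rfl fun i _ => by ring

set_option maxHeartbeats 2000000 in
theorem stmt3 {n d : ℕ} (A : Matrix (Fin n) (Fin d) ℝ) (w : Fin d → ℝ)
    (U : Finset (Fin d)) (k : ℕ) (hk : 0 < k) :
    ∀ L S : Finset (Fin d), Disjoint L S → L ⊆ U → S.card ≤ k →
      (sInf (sparseQuad A (U.card + k)) / sSup (sparseQuad A (U.card + 1))) *
          (inChange A w (S ∪ L) - inChange A w L) ≤
        ∑ i ∈ S, (inChange A w (insert i L) - inChange A w L) := by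
  intro L S hdisj hLU hScard
  set μ := sInf (sparseQuad A (U.card + k)) with hμdef
  set ν := sSup (sparseQuad A (U.card + 1)) with hνdef
  set b : EuclideanSpace ℝ (Fin n) := colMap A w with hbdef
  set r : EuclideanSpace ℝ (Fin n) :=
    b - (Submodule.orthogonalProjectionOnto (colSpan A L) b : EuclideanSpace ℝ (Fin n)) with hrdef
  have hrL : r ∈ (colSpan A L)ᗮ := Submodule.sub_starProjection_mem_orthogonal b
  have hdiffW : inChange A w (S ∪ L) - inChange A w L =
      ‖(Submodule.orthogonalProjectionOnto (colSpan A (S ∪ L)) r : EuclideanSpace ℝ (Fin n))‖ ^ 2 :=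
    diff_eq A w Finset.subset_union_right
  have hdiffi : ∀ i ∈ S, inChange A w (insert i L) - inChange A w L =
      ‖(Submodule.orthogonalProjectionOnto (colSpan A (insert i L)) r : EuclideanSpace ℝ (Fin n))‖ ^ 2 :=
    fun i _ => diff_eq A w (Finset.subset_insert i L)
  have hRHS0 : 0 ≤ ∑ i ∈ S, (inChange A w (insert i L) - inChange A w L) :=
    Finset.sum_nonneg fun i hi => by rw [hdiffi i hi]; positivity
  have hν0 : 0 ≤ ν := Real.sSup_nonneg (by rintro e ⟨z, _, _, rfl⟩; positivity)
  have hμ0 : 0 ≤ μ := Real.sInf_nonneg (by rintro e ⟨z, _, _, rfl⟩; positivity)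
  rcases eq_or_lt_of_le hν0 with hν | hν
  · rw [← hν, div_zero, zero_mul]; exact hRHS0
  -- inner products with columns
  have hcL : ∀ j ∈ L, ⟪r, colMap A (Pi.single j 1)⟫ = 0 := by
    intro j hj
    have hmem : colMap A (Pi.single j 1) ∈ colSpan A L :=
      mem_colSpan.mpr ⟨Pi.single j 1,
        fun j' hj' => Pi.single_eq_of_ne (by rintro rfl; exact hj' hj) 1, rfl⟩
    exact ((colSpan A L).mem_orthogonal' r).mp hrL _ hmem
  -- step 2 : per-element bound
  have hstep2 : ∀ i ∈ S, ⟪r, colMap A (Pi.single i 1)⟫ ^ 2 ≤ ν *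
      ‖(Submodule.orthogonalProjectionOnto (colSpan A (insert i L)) r : EuclideanSpace ℝ (Fin n))‖ ^ 2 := by
    intro i hi
    set Pr : EuclideanSpace ℝ (Fin n) :=
      (Submodule.orthogonalProjectionOnto (colSpan A (insert i L)) r : EuclideanSpace ℝ (Fin n)) with hPrdef
    set a : EuclideanSpace ℝ (Fin n) := colMap A (Pi.single i 1) with hadef
    set bi : EuclideanSpace ℝ (Fin n) :=
      a - (Submodule.orthogonalProjectionOnto (colSpan A L) a : EuclideanSpace ℝ (Fin n)) with hbidef
    have hamem : a ∈ colSpan A (insert i L) :=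
      mem_colSpan.mpr ⟨Pi.single i 1,
        fun j hj => Pi.single_eq_of_ne (by rintro rfl; exact hj (Finset.mem_insert_self j L)) 1, rfl⟩
    have hbimem : bi ∈ colSpan A (insert i L) :=
      (colSpan A (insert i L)).sub_mem hamem
        (colSpan_mono (Finset.subset_insert i L) (Submodule.orthogonalProjectionOnto (colSpan A L) a).2)
    have h1 : ⟪r, a⟫ = ⟪r, bi⟫ := by
      have h0 : ⟪r, (Submodule.orthogonalProjectionOnto (colSpan A L) a : EuclideanSpace ℝ (Fin n))⟫ = 0 :=
        ((colSpan A L).mem_orthogonal' r).mp hrL _ (Submodule.orthogonalProjectionOnto (colSpan A L) a).2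
      rw [hbidef, inner_sub_right, h0, sub_zero]
    have h2 : ⟪r, bi⟫ = ⟪Pr, bi⟫ := by
      have horth : ⟪r - Pr, bi⟫ = 0 :=
        ((colSpan A (insert i L)).mem_orthogonal' (r - Pr)).mp
          (Submodule.sub_starProjection_mem_orthogonal r) _ hbimem
      rw [inner_sub_left] at horth
      linarith
    have h3 : ‖bi‖ ^ 2 ≤ ν := by
      have hpyth := proj_pyth (colSpan A L) a 0 (zero_mem _)
      rw [sub_zero, sub_zero, ← hbidef] at hpyth
      have hcol := col_norm_le A i (U.card + 1) (Nat.le_add_left 1 U.card)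
      rw [← hadef, ← hνdef] at hcol
      nlinarith [sq_nonneg ‖(Submodule.orthogonalProjectionOnto (colSpan A L) a : EuclideanSpace ℝ (Fin n))‖]
    have h4 : |⟪Pr, bi⟫| ≤ ‖Pr‖ * ‖bi‖ := abs_real_inner_le_norm _ _
    calc ⟪r, a⟫ ^ 2 = ⟪Pr, bi⟫ ^ 2 := by rw [h1, h2]
      _ ≤ (‖Pr‖ * ‖bi‖) ^ 2 := by
          rw [← sq_abs]; exact pow_le_pow_left₀ (abs_nonneg _) h4 2
      _ = ‖bi‖ ^ 2 * ‖Pr‖ ^ 2 := by ring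
      _ ≤ ν * ‖Pr‖ ^ 2 := mul_le_mul_of_nonneg_right h3 (sq_nonneg _)
  -- step 3 : the projection bound
  set D : ℝ :=
    ‖(Submodule.orthogonalProjectionOnto (colSpan A (S ∪ L)) r : EuclideanSpace ℝ (Fin n))‖ ^ 2 with hDdef
  have hD0 : 0 ≤ D := sq_nonneg _
  obtain ⟨x, hxsupp, hxeq⟩ := mem_colSpan.mp (Submodule.orthogonalProjectionOnto (colSpan A (S ∪ L)) r).2
  have hDinner : D = ∑ j ∈ S, x j * ⟪r, colMap A (Pi.single j 1)⟫ := by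
    have h5 : D = ⟪r, (Submodule.orthogonalProjectionOnto (colSpan A (S ∪ L)) r : EuclideanSpace ℝ (Fin n))⟫ := by
      have horth : ⟪r - (Submodule.orthogonalProjectionOnto (colSpan A (S ∪ L)) r : EuclideanSpace ℝ (Fin n)),
          (Submodule.orthogonalProjectionOnto (colSpan A (S ∪ L)) r : EuclideanSpace ℝ (Fin n))⟫ = 0 :=
        ((colSpan A (S ∪ L)).mem_orthogonal' _).mp
          (Submodule.sub_starProjection_mem_orthogonal r) _ (Submodule.orthogonalProjectionOnto (colSpan A (S ∪ L)) r).2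
      rw [inner_sub_left] at horth
      rw [hDdef, ← real_inner_self_eq_norm_sq]
      linarith
    have e1 : ∑ j ∈ S ∪ L, x j * ⟪r, colMap A (Pi.single j 1)⟫ =
        ∑ j, x j * ⟪r, colMap A (Pi.single j 1)⟫ :=
      Finset.sum_subset (Finset.subset_univ _) (fun j _ hj => by rw [hxsupp j hj, zero_mul])
    have e2 : ∑ j ∈ S ∪ L, x j * ⟪r, colMap A (Pi.single j 1)⟫ =
        (∑ j ∈ S, x j * ⟪r, colMap A (Pi.single j 1)⟫) +
          ∑ j ∈ L, x j * ⟪r, colMap A (Pi.single j 1)⟫ :=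
      Finset.sum_union hdisj.symm
    have e3 : ∑ j ∈ L, x j * ⟪r, colMap A (Pi.single j 1)⟫ = 0 :=
      Finset.sum_eq_zero fun j hj => by rw [hcL j hj, mul_zero]
    rw [h5, ← hxeq, inner_colMap, ← e1, e2, e3, add_zero]
  have hμD : μ * D ≤ ∑ j ∈ S, ⟪r, colMap A (Pi.single j 1)⟫ ^ 2 := by
    by_cases hDz : D = 0
    · rw [hDz, mul_zero]; positivity
    have hDpos : 0 < D := lt_of_le_of_ne hD0 (Ne.symm hDz)
    have hc2 : (0:ℝ) ≤ ∑ j ∈ S, ⟪r, colMap A (Pi.single j 1)⟫ ^ 2 := by positivity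
    have hCS := Finset.sum_mul_sq_le_sq_mul_sq S x (fun j => ⟪r, colMap A (Pi.single j 1)⟫)
    have hxall : (∑ j ∈ S, x j ^ 2) ≤ ∑ j, x j ^ 2 :=
      Finset.sum_le_sum_of_subset_of_nonneg (Finset.subset_univ S) (fun j _ _ => sq_nonneg _)
    have hcard2 : (S ∪ L).card ≤ U.card + k := by
      calc (S ∪ L).card ≤ S.card + L.card := Finset.card_union_le _ _
        _ ≤ k + U.card := add_le_add hScard (Finset.card_le_card hLU)
        _ = U.card + k := Nat.add_comm _ _
    have hmu := mu_le A hxsupp hcard2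
    rw [← hμdef] at hmu
    have hAx : ∑ i, (A.mulVec x i) ^ 2 = D := by
      calc ∑ i, (A.mulVec x i) ^ 2 = ‖colMap A x‖ ^ 2 := by
            rw [normsq_eq]; exact Finset.sum_congr rfl fun _ _ => rfl
        _ = D := by rw [hxeq]
    rw [hAx] at hmu
    have h6 : D ^ 2 ≤ (∑ j, x j ^ 2) * ∑ j ∈ S, ⟪r, colMap A (Pi.single j 1)⟫ ^ 2 := by
      rw [hDinner]
      exact hCS.trans (mul_le_mul_of_nonneg_right hxall hc2)
    have h7 : μ * D ^ 2 ≤ D * ∑ j ∈ S, ⟪r, colMap A (Pi.single j 1)⟫ ^ 2 := by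
      calc μ * D ^ 2 ≤ μ * ((∑ j, x j ^ 2) * ∑ j ∈ S, ⟪r, colMap A (Pi.single j 1)⟫ ^ 2) :=
            mul_le_mul_of_nonneg_left h6 hμ0
        _ = (μ * ∑ j, x j ^ 2) * ∑ j ∈ S, ⟪r, colMap A (Pi.single j 1)⟫ ^ 2 := by ring
        _ ≤ D * ∑ j ∈ S, ⟪r, colMap A (Pi.single j 1)⟫ ^ 2 :=
            mul_le_mul_of_nonneg_right hmu hc2
    have h8 : (μ * D) * D ≤ (∑ j ∈ S, ⟪r, colMap A (Pi.single j 1)⟫ ^ 2) * D := by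
      nlinarith
    exact le_of_mul_le_mul_right h8 hDpos
  -- conclusion
  have hsum : ∑ j ∈ S, ⟪r, colMap A (Pi.single j 1)⟫ ^ 2 ≤
      ν * ∑ i ∈ S, (inChange A w (insert i L) - inChange A w L) := by
    rw [Finset.mul_sum]
    exact Finset.sum_le_sum fun i hi => by rw [hdiffi i hi]; exact hstep2 i hi
  rw [hdiffW, div_mul_eq_mul_div, div_le_iff₀ hν]
  calc μ * D ≤ ∑ j ∈ S, ⟪r, colMap A (Pi.single j 1)⟫ ^ 2 := hμD
    _ ≤ ν * ∑ i ∈ S, (inChange A w (insert i L) - inChange A w L) := hsum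
    _ = (∑ i ∈ S, (inChange A w (insert i L) - inChange A w L)) * ν := mul_comm _ _
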